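/- Let N_S be as above (pairs of a uniformly random perfect matching internal to S). If |S| − 1 ≤ β(n−1) and β > 0, then Pr[N_S > β|S|] ≤ 2(n−1)/((2β(n−1) − (|S|−1))²). -/

import Mathlib

open MeasureTheory

/-- The number of pairs of the matching `M` with both endpoints inside `S`:
`N_S = Σ_{i<j, i,j∈S} 1[{i,j} matched]`. -/
def numInternalPairs {n : ℕ} (S : Finset (Fin n)) (M : Fin n → Fin n) : ℕ :=
  ((S ×ˢ S).filter (fun p => p.1 < p.2 ∧ M p.1 = p.2)).card

lemma pairs_card_aux {n : ℕ} (T : Finset (Fin n)) :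
    2 * ((T ×ˢ T).filter (fun p => p.1 < p.2)).card = T.card * T.card - T.card := by
  classical
  have h1 : ((T ×ˢ T).filter (fun p => p.1 < p.2)).card
      = ((T ×ˢ T).filter (fun p => p.2 < p.1)).card := by
    apply Finset.card_bij (fun p _ => (p.2, p.1))
    · intro p hp
      simp only [Finset.mem_filter, Finset.mem_product] at hp ⊢
      exact ⟨⟨hp.1.2, hp.1.1⟩, hp.2⟩
    · intro p hp q hq h
      simp only [Prod.ext_iff] at h ⊢
      exact ⟨h.2, h.1⟩
    · intro q hq
      simp only [Finset.mem_filter, Finset.mem_product] at hq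
      refine ⟨(q.2, q.1), ?_, rfl⟩
      simp only [Finset.mem_filter, Finset.mem_product]
      exact ⟨⟨hq.1.2, hq.1.1⟩, hq.2⟩
  have h2 : (T ×ˢ T).filter (fun p => p.1 < p.2) ∪ (T ×ˢ T).filter (fun p => p.2 < p.1)
      = T.offDiag := by
    rw [← Finset.filter_or]
    ext p
    simp only [Finset.mem_filter, Finset.mem_offDiag, Finset.mem_product]
    exact ⟨fun h => ⟨h.1.1, h.1.2, h.2.elim (fun hlt => ne_of_lt hlt) (fun hgt => ne_of_gt hgt)⟩,
      fun h => ⟨⟨h.1, h.2.1⟩, lt_or_gt_of_ne h.2.2⟩⟩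
  have hdisj : Disjoint ((T ×ˢ T).filter (fun p => p.1 < p.2))
      ((T ×ˢ T).filter (fun p => p.2 < p.1)) := by
    rw [Finset.disjoint_left]
    intro p hp hq
    simp only [Finset.mem_filter] at hp hq
    exact absurd hq.2 (not_lt_of_gt hp.2)
  have := Finset.card_union_of_disjoint hdisj
  rw [h2, Finset.offDiag_card] at this
  omega

lemma partition_aux {Ω : Type*} [MeasurableSpace Ω] (ℙ : Measure Ω) [IsProbabilityMeasure ℙ]
    {n : ℕ} (M : Ω → Fin n → Fin n)
    (hmeas : ∀ i j : Fin n, MeasurableSet {ω | M ω i = j})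
    (B : Set Ω) (hB : MeasurableSet B) (k : Fin n) :
    ∑ m : Fin n, (ℙ (B ∩ {ω | M ω k = m})).toReal = (ℙ B).toReal := by
  have hcover : ⋃ m ∈ (Finset.univ : Finset (Fin n)), (B ∩ {ω | M ω k = m}) = B := by
    ext ω
    simp only [Set.mem_iUnion, Set.mem_inter_iff, Set.mem_setOf_eq, Finset.mem_univ,
      exists_prop, true_and]
    constructor
    · rintro ⟨m, hm, _⟩; exact hm
    · intro h; exact ⟨M ω k, h, rfl⟩
  have hpd : ((Finset.univ : Finset (Fin n)) : Set (Fin n)).PairwiseDisjoint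
      (fun m => B ∩ {ω | M ω k = m}) := by
    intro a _ b _ hab
    simp only [Function.onFun]
    rw [Set.disjoint_left]
    rintro ω ⟨_, ha⟩ ⟨_, hb⟩
    exact hab (ha ▸ hb ▸ rfl)
  have hm : ∀ m ∈ (Finset.univ : Finset (Fin n)), MeasurableSet (B ∩ {ω | M ω k = m}) :=
    fun m _ => hB.inter (hmeas k m)
  have := measure_biUnion_finset (μ := ℙ) hpd hm
  rw [hcover] at this
  rw [this, ENNReal.toReal_sum]
  intro m _
  exact measure_ne_top ℙ _

lemma zero_aux {Ω : Type*} [MeasurableSpace Ω] (ℙ : Measure Ω) [IsProbabilityMeasure ℙ]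
    {n : ℕ} (hn4 : 4 ≤ n) (M : Ω → Fin n → Fin n)
    (hmeas : ∀ i j : Fin n, MeasurableSet {ω | M ω i = j})
    (hpair : ∀ i j : Fin n, i ≠ j → (ℙ {ω | M ω i = j}).toReal = 1/((n:ℝ)-1))
    (hpair2 : ∀ i j k l : Fin n, i ≠ j → k ≠ l → i ≠ k → i ≠ l → j ≠ k → j ≠ l →
      (ℙ {ω | M ω i = j ∧ M ω k = l}).toReal = 1/(((n:ℝ)-1)*((n:ℝ)-3)))
    (i j k : Fin n) (hij : i ≠ j) (hik : i ≠ k) (hjk : j ≠ k)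
    (l : Fin n) (hl : l = i ∨ l = j) :
    (ℙ {ω | M ω i = j ∧ M ω k = l}).toReal = 0 := by
  classical
  have hnR : (4:ℝ) ≤ (n:ℝ) := by exact_mod_cast hn4
  have hsplit : ∀ m : Fin n, {ω | M ω i = j ∧ M ω k = m}
      = {ω | M ω i = j} ∩ {ω | M ω k = m} := fun m => rfl
  have hsum := partition_aux ℙ M hmeas {ω | M ω i = j} (hmeas i j) k
  rw [hpair i j hij] at hsum
  set T : Finset (Fin n) := {i, j, k} with hT
  have hTsub : T ⊆ Finset.univ := Finset.subset_univ T
  have hTcard : T.card = 3 := by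
    rw [hT]
    rw [Finset.card_insert_of_notMem (by simp [hij, hik]),
      Finset.card_insert_of_notMem (by simp [hjk])]
    simp
  have hsdiff := Finset.sum_sdiff (f := fun m => (ℙ ({ω | M ω i = j} ∩ {ω | M ω k = m})).toReal)
    hTsub
  have houtside : ∑ m ∈ Finset.univ \ T, (ℙ ({ω | M ω i = j} ∩ {ω | M ω k = m})).toReal
      = ((n:ℝ) - 3) * (1/(((n:ℝ)-1)*((n:ℝ)-3))) := by
    rw [Finset.sum_congr rfl (fun m hm => ?_), Finset.sum_const, nsmul_eq_mul]
    · congr 1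
      rw [Finset.card_sdiff_of_subset hTsub, hTcard]
      have : 3 ≤ n := by omega
      simp only [Finset.card_univ, Fintype.card_fin]
      push_cast [Nat.cast_sub (by omega : 3 ≤ n)]
      ring
    · simp only [Finset.mem_sdiff, Finset.mem_univ, true_and, hT, Finset.mem_insert,
        Finset.mem_singleton, not_or] at hm
      obtain ⟨hmi, hmj, hmk⟩ := hm
      rw [← hsplit]
      exact hpair2 i j k m hij (Ne.symm hmk) hik (Ne.symm hmi) hjk (Ne.symm hmj)
  have hinside : ∑ m ∈ T, (ℙ ({ω | M ω i = j} ∩ {ω | M ω k = m})).toReal = 0 := by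
    have h3 : (n:ℝ) - 3 ≠ 0 := by linarith
    have h1' : (n:ℝ) - 1 ≠ 0 := by linarith
    have h1 : ((n:ℝ) - 3) * (1/(((n:ℝ)-1)*((n:ℝ)-3))) = 1/((n:ℝ)-1) := by
      field_simp
    rw [houtside, h1] at hsdiff
    linarith [hsdiff]
  have hnn : ∀ m ∈ T, 0 ≤ (ℙ ({ω | M ω i = j} ∩ {ω | M ω k = m})).toReal :=
    fun m _ => ENNReal.toReal_nonneg
  have hlT : l ∈ T := by
    rcases hl with h | h <;> simp [hT, h]
  exact (Finset.sum_eq_zero_iff_of_nonneg hnn).mp hinside l hlT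

lemma zero_aux2 {Ω : Type*} [MeasurableSpace Ω] (ℙ : Measure Ω) [IsProbabilityMeasure ℙ]
    {n : ℕ} (hn4 : 4 ≤ n) (M : Ω → Fin n → Fin n)
    (hmeas : ∀ i j : Fin n, MeasurableSet {ω | M ω i = j})
    (hpair : ∀ i j : Fin n, i ≠ j → (ℙ {ω | M ω i = j}).toReal = 1/((n:ℝ)-1))
    (hpair2 : ∀ i j k l : Fin n, i ≠ j → k ≠ l → i ≠ k → i ≠ l → j ≠ k → j ≠ l →
      (ℙ {ω | M ω i = j ∧ M ω k = l}).toReal = 1/(((n:ℝ)-1)*((n:ℝ)-3)))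
    (i j l : Fin n) (hij : i ≠ j) (hil : i ≠ l) (hjl : j ≠ l) :
    (ℙ {ω | M ω i = j ∧ M ω j = l}).toReal = 0 := by
  classical
  have hsplit : ∀ m : Fin n, {ω | M ω j = l} ∩ {ω | M ω i = m}
      = {ω | M ω i = m ∧ M ω j = l} := by
    intro m; ext ω; simp only [Set.mem_inter_iff, Set.mem_setOf_eq]; tauto
  have hsum := partition_aux ℙ M hmeas {ω | M ω j = l} (hmeas j l) i
  rw [hpair j l hjl] at hsum
  set T : Finset (Fin n) := {i, j, l} with hT
  have hTsub : T ⊆ Finset.univ := Finset.subset_univ T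
  have hTcard : T.card = 3 := by
    rw [hT]
    rw [Finset.card_insert_of_notMem (by simp [hij, hil]),
      Finset.card_insert_of_notMem (by simp [hjl])]
    simp
  have hsdiff := Finset.sum_sdiff (f := fun m => (ℙ ({ω | M ω j = l} ∩ {ω | M ω i = m})).toReal)
    hTsub
  have houtside : ∑ m ∈ Finset.univ \ T, (ℙ ({ω | M ω j = l} ∩ {ω | M ω i = m})).toReal
      = ((n:ℝ) - 3) * (1/(((n:ℝ)-1)*((n:ℝ)-3))) := by
    rw [Finset.sum_congr rfl (fun m hm => ?_), Finset.sum_const, nsmul_eq_mul]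
    · congr 1
      rw [Finset.card_sdiff_of_subset hTsub, hTcard]
      simp only [Finset.card_univ, Fintype.card_fin]
      push_cast [Nat.cast_sub (by omega : 3 ≤ n)]
      ring
    · simp only [Finset.mem_sdiff, Finset.mem_univ, true_and, hT, Finset.mem_insert,
        Finset.mem_singleton, not_or] at hm
      obtain ⟨hmi, hmj, hml⟩ := hm
      rw [hsplit]
      exact hpair2 i m j l (Ne.symm hmi) hjl hij hil hmj hml
  have hinside : ∑ m ∈ T, (ℙ ({ω | M ω j = l} ∩ {ω | M ω i = m})).toReal = 0 := by
    have hnR : (4:ℝ) ≤ (n:ℝ) := by exact_mod_cast hn4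
    have h3 : (n:ℝ) - 3 ≠ 0 := by linarith
    have h1' : (n:ℝ) - 1 ≠ 0 := by linarith
    have h1 : ((n:ℝ) - 3) * (1/(((n:ℝ)-1)*((n:ℝ)-3))) = 1/((n:ℝ)-1) := by
      field_simp
    rw [houtside, h1] at hsdiff
    linarith [hsdiff]
  have hnn : ∀ m ∈ T, 0 ≤ (ℙ ({ω | M ω j = l} ∩ {ω | M ω i = m})).toReal :=
    fun m _ => ENNReal.toReal_nonneg
  have hjT : j ∈ T := by simp [hT]
  have := (Finset.sum_eq_zero_iff_of_nonneg hnn).mp hinside j hjT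
  rw [hsplit j] at this
  exact this

set_option maxHeartbeats 2000000 in
/-- Let N_S be the number of pairs of a uniformly random perfect
matching of {1,…,n} (n even) internal to a fixed subset S with `3 ≤ |S| ≤ n`
(matching pair probabilities `1/(n−1)` and `1/((n−1)(n−3))` as before).  If
`|S| − 1 ≤ β(n−1)` and `β > 0`, then
`Pr[N_S > β|S|] ≤ 2(n−1)/((2β(n−1) − (|S|−1))²)`. -/
theorem stmt_19 {Ω : Type*} [MeasurableSpace Ω] (ℙ : Measure Ω)
    [IsProbabilityMeasure ℙ] (n : ℕ) (hn : Even n)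
    (M : Ω → Fin n → Fin n) (S : Finset (Fin n)) (hS : 3 ≤ S.card)
    (hmeas : ∀ i j : Fin n, MeasurableSet {ω | M ω i = j})
    (hpair : ∀ i j : Fin n, i ≠ j → (ℙ {ω | M ω i = j}).toReal = 1/((n:ℝ)-1))
    (hpair2 : ∀ i j k l : Fin n, i ≠ j → k ≠ l → i ≠ k → i ≠ l → j ≠ k → j ≠ l →
      (ℙ {ω | M ω i = j ∧ M ω k = l}).toReal = 1/(((n:ℝ)-1)*((n:ℝ)-3)))
    (β : ℝ) (hβ : 0 < β) (hSβ : (S.card : ℝ) - 1 ≤ β * ((n:ℝ)-1)) :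
    (ℙ {ω | β * (S.card : ℝ) < (numInternalPairs S (M ω) : ℝ)}).toReal
      ≤ 2*((n:ℝ)-1) / (2*β*((n:ℝ)-1) - ((S.card : ℝ)-1))^2 := by
  classical
  have hSn : S.card ≤ n := by simpa using Finset.card_le_univ S
  have hn4 : 4 ≤ n := by
    rcases hn with ⟨r, hr⟩; omega
  have hnR : (4:ℝ) ≤ (n:ℝ) := by exact_mod_cast hn4
  have hsR : (3:ℝ) ≤ (S.card:ℝ) := by exact_mod_cast hS
  have hsn : (S.card:ℝ) ≤ (n:ℝ) := by exact_mod_cast hSn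
  have hn1 : (0:ℝ) < (n:ℝ)-1 := by linarith
  have hn3 : (0:ℝ) < (n:ℝ)-3 := by linarith
  set s : ℝ := (S.card : ℝ) with hsdef
  set P : Finset (Fin n × Fin n) := (S ×ˢ S).filter (fun p => p.1 < p.2) with hPdef
  set A : Fin n × Fin n → Set Ω := fun p => {ω | M ω p.1 = p.2} with hAdef
  have hAmeas : ∀ p : Fin n × Fin n, MeasurableSet (A p) := fun p => hmeas p.1 p.2
  set X : Ω → ℝ := fun ω => ∑ p ∈ P, (A p).indicator (fun _ => (1:ℝ)) ω with hXdef
  have hPmem : ∀ p ∈ P, p.1 ∈ S ∧ p.2 ∈ S ∧ p.1 < p.2 := by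
    intro p hp
    rw [hPdef, Finset.mem_filter, Finset.mem_product] at hp
    exact ⟨hp.1.1, hp.1.2, hp.2⟩
  -- X equals the (real-cast) number of internal pairs
  have hXeq : ∀ ω, (numInternalPairs S (M ω) : ℝ) = X ω := by
    intro ω
    unfold numInternalPairs
    rw [← Finset.filter_filter, ← hPdef, Finset.card_filter]
    push_cast
    refine Finset.sum_congr rfl fun p _ => ?_
    by_cases h : M ω p.1 = p.2
    · simp [Set.indicator_apply, hAdef, h]
    · simp [Set.indicator_apply, hAdef, h]
  -- moments
  have hX2 : MemLp X 2 ℙ :=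
    memLp_finset_sum P (fun p _ =>
      memLp_indicator_const 2 (hAmeas p) 1 (Or.inr (measure_ne_top ℙ _)))
  have hint : ∀ p : Fin n × Fin n, Integrable ((A p).indicator (fun _ => (1:ℝ))) ℙ :=
    fun p => (integrable_const (1:ℝ)).indicator (hAmeas p)
  have hint2 : ∀ p q : Fin n × Fin n,
      Integrable ((A p ∩ A q).indicator (fun _ => (1:ℝ))) ℙ :=
    fun p q => (integrable_const (1:ℝ)).indicator ((hAmeas p).inter (hAmeas q))
  have hEX : ∫ ω, X ω ∂ℙ = ∑ p ∈ P, (ℙ (A p)).toReal := by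
    rw [hXdef]
    rw [integral_finset_sum P (fun p _ => hint p)]
    exact Finset.sum_congr rfl fun p _ => integral_indicator_one (hAmeas p)
  have hEXval : ∫ ω, X ω ∂ℙ = (P.card : ℝ) * (1/((n:ℝ)-1)) := by
    rw [hEX, Finset.sum_congr rfl (fun p hp => hpair p.1 p.2 (ne_of_lt (hPmem p hp).2.2)),
      Finset.sum_const, nsmul_eq_mul]
  have hEX2 : ∫ ω, (X ω)^2 ∂ℙ = ∑ p ∈ P, ∑ q ∈ P, (ℙ (A p ∩ A q)).toReal := by
    have hXsq : ∀ ω, (X ω)^2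
        = ∑ p ∈ P, ∑ q ∈ P, ((A p ∩ A q).indicator (fun _ => (1:ℝ)) ω) := by
      intro ω
      rw [sq, hXdef]
      rw [Finset.sum_mul_sum]
      refine Finset.sum_congr rfl fun p _ => Finset.sum_congr rfl fun q _ => ?_
      rw [← Set.inter_indicator_mul]
      simp
    simp only [hXsq]
    rw [integral_finset_sum P (fun p _ => integrable_finset_sum P (fun q _ => hint2 p q))]
    refine Finset.sum_congr rfl fun p _ => ?_
    rw [integral_finset_sum P (fun q _ => hint2 p q)]
    exact Finset.sum_congr rfl fun q _ =>
      integral_indicator_one ((hAmeas p).inter (hAmeas q))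
  -- cross terms with shared coordinates vanish
  have hshared : ∀ p ∈ P, ∀ q ∈ P, p ≠ q →
      (p.1 = q.1 ∨ p.1 = q.2 ∨ p.2 = q.1 ∨ p.2 = q.2) →
      (ℙ (A p ∩ A q)).toReal = 0 := by
    intro p hp q hq hne hsh
    obtain ⟨hp1, hp2, hplt⟩ := hPmem p hp
    obtain ⟨hq1, hq2, hqlt⟩ := hPmem q hq
    have hAeq : A p ∩ A q = {ω | M ω p.1 = p.2 ∧ M ω q.1 = q.2} := rfl
    rcases hsh with h | h | h | h
    · -- p.1 = q.1, so p.2 ≠ q.2 and the event is empty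
      have hne2 : p.2 ≠ q.2 := by
        intro h2; exact hne (Prod.ext h h2)
      have : A p ∩ A q = ∅ := by
        ext ω
        simp only [hAeq, Set.mem_setOf_eq, Set.mem_empty_iff_false, iff_false, not_and]
        intro h1 h2
        exact hne2 (h1 ▸ h ▸ h2 ▸ rfl)
      rw [this]
      simp
    · -- p.1 = q.2 : event M p.1 = p.2 ∧ M q.1 = p.1
      rw [hAeq, ← h]
      exact zero_aux ℙ hn4 M hmeas hpair hpair2 p.1 p.2 q.1
        (ne_of_lt hplt) (ne_of_gt (h ▸ hqlt)) (ne_of_gt (lt_trans (h ▸ hqlt) hplt))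
        p.1 (Or.inl rfl)
    · -- p.2 = q.1 : event M p.1 = p.2 ∧ M p.2 = q.2
      rw [hAeq, ← h]
      exact zero_aux2 ℙ hn4 M hmeas hpair hpair2 p.1 p.2 q.2
        (ne_of_lt hplt) (ne_of_lt (lt_trans hplt (h ▸ hqlt))) (ne_of_lt (h ▸ hqlt))
    · -- p.2 = q.2 : event M p.1 = p.2 ∧ M q.1 = p.2
      rw [hAeq, ← h]
      have h1k : p.1 ≠ q.1 := by
        intro h2; exact hne (Prod.ext h2 h)
      exact zero_aux ℙ hn4 M hmeas hpair hpair2 p.1 p.2 q.1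
        (ne_of_lt hplt) h1k (ne_of_gt (h ▸ hqlt)) p.2 (Or.inr rfl)
  have hdisjq : ∀ p ∈ P, ∀ q ∈ P,
      ¬(p.1 = q.1 ∨ p.1 = q.2 ∨ p.2 = q.1 ∨ p.2 = q.2) →
      (ℙ (A p ∩ A q)).toReal = 1/(((n:ℝ)-1)*((n:ℝ)-3)) := by
    intro p hp q hq hnsh
    push_neg at hnsh
    obtain ⟨h1, h2, h3, h4⟩ := hnsh
    have hplt := (hPmem p hp).2.2
    have hqlt := (hPmem q hq).2.2
    exact hpair2 p.1 p.2 q.1 q.2 (ne_of_lt hplt) (ne_of_lt hqlt) h1 h2 h3 h4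
  -- cardinality of P
  have hmcard : (P.card : ℝ) = s * (s - 1) / 2 := by
    have h := pairs_card_aux S
    rw [← hPdef] at h
    have hle : S.card ≤ S.card * S.card := Nat.le_mul_of_pos_left _ (by omega)
    have h2 : (2:ℝ) * (P.card:ℝ) = s * s - s := by
      rw [hsdef]
      have h3 := congrArg (fun k : ℕ => (k:ℝ)) h
      push_cast [Nat.cast_sub hle] at h3
      linarith
    linarith
  -- inner sum bound
  have hinner : ∀ p ∈ P, ∑ q ∈ P, (ℙ (A p ∩ A q)).toReal
      ≤ 1/((n:ℝ)-1) + (s-2)*(s-3)/2 * (1/(((n:ℝ)-1)*((n:ℝ)-3))) := by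
    intro p hp
    obtain ⟨hp1, hp2, hplt⟩ := hPmem p hp
    rw [← Finset.add_sum_erase P _ hp]
    have hself : (ℙ (A p ∩ A p)).toReal = 1/((n:ℝ)-1) := by
      rw [Set.inter_self]
      exact hpair p.1 p.2 (ne_of_lt hplt)
    rw [hself]
    gcongr
    set Q := (P.erase p).filter
      (fun q => ¬(p.1 = q.1 ∨ p.1 = q.2 ∨ p.2 = q.1 ∨ p.2 = q.2)) with hQdef
    have hsum_eq : ∑ q ∈ P.erase p, (ℙ (A p ∩ A q)).toReal
        = ∑ q ∈ Q, (ℙ (A p ∩ A q)).toReal := by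
      symm
      apply Finset.sum_subset (Finset.filter_subset _ _)
      intro q hq hnq
      simp only [Finset.mem_filter, not_and, not_not] at hnq
      exact hshared p hp q (Finset.mem_of_mem_erase hq)
        (fun h => (Finset.ne_of_mem_erase hq) h.symm) (hnq hq)
    rw [hsum_eq]
    have hQval : ∑ q ∈ Q, (ℙ (A p ∩ A q)).toReal
        = (Q.card : ℝ) * (1/(((n:ℝ)-1)*((n:ℝ)-3))) := by
      rw [Finset.sum_congr rfl (fun q hq => ?_), Finset.sum_const, nsmul_eq_mul]
      rw [hQdef, Finset.mem_filter] at hq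
      exact hdisjq p hp q (Finset.mem_of_mem_erase hq.1) hq.2
    rw [hQval]
    have hQcard : (Q.card : ℝ) ≤ (s-2)*(s-3)/2 := by
      set T := (S.erase p.1).erase p.2 with hTdef
      have hQsub : Q ⊆ (T ×ˢ T).filter (fun q => q.1 < q.2) := by
        intro q hq
        rw [hQdef, Finset.mem_filter, Finset.mem_erase] at hq
        obtain ⟨⟨hqne, hqP⟩, hnsh⟩ := hq
        push_neg at hnsh
        obtain ⟨h1, h2, h3, h4⟩ := hnsh
        obtain ⟨hq1, hq2, hqlt⟩ := hPmem q hqP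
        rw [Finset.mem_filter, Finset.mem_product]
        refine ⟨⟨?_, ?_⟩, hqlt⟩
        · rw [hTdef, Finset.mem_erase, Finset.mem_erase]
          exact ⟨fun h => h3 h.symm, fun h => h1 h.symm, hq1⟩
        · rw [hTdef, Finset.mem_erase, Finset.mem_erase]
          exact ⟨fun h => h4 h.symm, fun h => h2 h.symm, hq2⟩
      have hTcard : T.card = S.card - 2 := by
        rw [hTdef, Finset.card_erase_of_mem, Finset.card_erase_of_mem hp1]
        · omega
        · rw [Finset.mem_erase]
          exact ⟨ne_of_gt hplt, hp2⟩
      have hTR : (T.card : ℝ) = s - 2 := by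
        rw [hTcard, hsdef]
        push_cast [Nat.cast_sub (by omega : 2 ≤ S.card)]
        ring
      have h2c := pairs_card_aux T
      have hle : T.card ≤ T.card * T.card := Nat.le_mul_of_pos_left _
        (by rw [hTcard]; omega)
      have h2cR : 2 * (((T ×ˢ T).filter (fun q => q.1 < q.2)).card : ℝ)
          = (s-2) * (s-2) - (s-2) := by
        have := congrArg (Nat.cast : ℕ → ℝ) h2c
        push_cast [Nat.cast_sub hle] at this
        rw [hTR] at this
        linarith [this]
      have hcle : (Q.card : ℝ) ≤ (((T ×ˢ T).filter (fun q => q.1 < q.2)).card : ℝ) := by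
        exact_mod_cast Finset.card_le_card hQsub
      nlinarith [hcle, h2cR]
    have hpos : (0:ℝ) ≤ 1/(((n:ℝ)-1)*((n:ℝ)-3)) := by positivity
    exact mul_le_mul_of_nonneg_right hQcard hpos
  -- second moment bound
  have hEX2le : ∫ ω, (X ω)^2 ∂ℙ
      ≤ (P.card : ℝ) * (1/((n:ℝ)-1) + (s-2)*(s-3)/2 * (1/(((n:ℝ)-1)*((n:ℝ)-3)))) := by
    rw [hEX2]
    calc ∑ p ∈ P, ∑ q ∈ P, (ℙ (A p ∩ A q)).toReal
        ≤ P.card • (1/((n:ℝ)-1) + (s-2)*(s-3)/2 * (1/(((n:ℝ)-1)*((n:ℝ)-3)))) :=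
          Finset.sum_le_card_nsmul _ _ _ hinner
      _ = _ := by rw [nsmul_eq_mul]
  have e1 : (n:ℝ)-1 ≠ 0 := ne_of_gt hn1
  have e3 : (n:ℝ)-3 ≠ 0 := ne_of_gt hn3
  -- variance bound
  have hbase : (s-2)*(s-3)*((n:ℝ)-1) ≤ s*(s-1)*((n:ℝ)-3) := by
    nlinarith [mul_nonneg (sub_nonneg.mpr hsn) (by linarith : (0:ℝ) ≤ 4*s-6),
      mul_nonneg (by linarith : (0:ℝ) ≤ s-1) (by linarith : (0:ℝ) ≤ s-3)]
  have hkey : (P.card : ℝ) * ((s-2)*(s-3)/2 * (1/(((n:ℝ)-1)*((n:ℝ)-3))))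
      ≤ ((P.card : ℝ) * (1/((n:ℝ)-1)))^2 := by
    rw [hmcard]
    have hL : s * (s-1) / 2 * ((s-2)*(s-3)/2 * (1/(((n:ℝ)-1)*((n:ℝ)-3))))
        = (s*(s-1)*((s-2)*(s-3))) / (4*(((n:ℝ)-1)*((n:ℝ)-3))) := by
      field_simp
      try ring
      try exact Or.inl trivial
    have hR : (s * (s-1) / 2 * (1/((n:ℝ)-1)))^2
        = (s*(s-1)*(s*(s-1))) / (4*(((n:ℝ)-1)*((n:ℝ)-1))) := by
      field_simp
      ring
    rw [hL, hR, div_le_div_iff₀ (by positivity) (by positivity)]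
    nlinarith [mul_le_mul_of_nonneg_left hbase
      (show (0:ℝ) ≤ s*(s-1)*((n:ℝ)-1) from by
        apply mul_nonneg; apply mul_nonneg <;> linarith; linarith),
      mul_nonneg (mul_nonneg (by linarith : (0:ℝ) ≤ s) (by linarith : (0:ℝ) ≤ s-1))
        (by linarith : (0:ℝ) ≤ (n:ℝ)-1)]
  have hvar : ProbabilityTheory.variance X ℙ ≤ ∫ ω, X ω ∂ℙ := by
    rw [ProbabilityTheory.variance_eq_sub hX2]
    have hpow : ∫ x, (X ^ 2) x ∂ℙ = ∫ ω, (X ω)^2 ∂ℙ := rfl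
    rw [hpow]
    have h1 : (∫ ω, X ω ∂ℙ)^2 = ((P.card : ℝ) * (1/((n:ℝ)-1)))^2 := by rw [hEXval]
    rw [hEXval]
    nlinarith [hEX2le, hkey, hEXval, h1]
  -- Chebyshev
  have hEvs : ∫ ω, X ω ∂ℙ = s * (s-1) / (2*((n:ℝ)-1)) := by
    rw [hEXval, hmcard]
    field_simp
  have hD : (0:ℝ) < 2*β*((n:ℝ)-1) - (s - 1) := by
    have : s - 1 ≤ β * ((n:ℝ)-1) := hSβ
    nlinarith [mul_pos hβ hn1]
  set c : ℝ := β * s - s * (s-1) / (2*((n:ℝ)-1)) with hcdef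
  have hcval : c = s * (2*β*((n:ℝ)-1) - (s-1)) / (2*((n:ℝ)-1)) := by
    rw [hcdef]
    field_simp
  have hc : 0 < c := by
    rw [hcval]
    apply div_pos
    · apply mul_pos (by linarith) hD
    · linarith
  have hsub : {ω | β * s < X ω} ⊆ {ω | c ≤ |X ω - ∫ x, X x ∂ℙ|} := by
    intro ω hω
    simp only [Set.mem_setOf_eq] at hω ⊢
    rw [hEvs]
    calc c = β * s - s * (s-1) / (2*((n:ℝ)-1)) := hcdef
      _ ≤ X ω - s * (s-1) / (2*((n:ℝ)-1)) := by linarith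
      _ ≤ |X ω - s * (s-1) / (2*((n:ℝ)-1))| := le_abs_self _
  have hcheb := ProbabilityTheory.meas_ge_le_variance_div_sq (μ := ℙ) hX2 hc
  have hmono := (measure_mono hsub).trans hcheb
  have htoReal : (ℙ {ω | β * s < X ω}).toReal
      ≤ ProbabilityTheory.variance X ℙ / c^2 := by
    have h := ENNReal.toReal_mono ENNReal.ofReal_ne_top hmono
    rwa [ENNReal.toReal_ofReal (div_nonneg (ProbabilityTheory.variance_nonneg X ℙ)
      (sq_nonneg c))] at h
  have hseteq : {ω | β * s < (numInternalPairs S (M ω):ℝ)} = {ω | β * s < X ω} := by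
    ext ω
    simp only [Set.mem_setOf_eq, hXeq ω]
  rw [hseteq]
  have hfinal : (∫ ω, X ω ∂ℙ) / c^2 ≤ 2*((n:ℝ)-1) / (2*β*((n:ℝ)-1) - (s-1))^2 := by
    rw [hEvs, div_le_div_iff₀ (pow_pos hc 2) (pow_pos hD 2), hcval]
    have h2 : 2*((n:ℝ)-1) * (s * (2*β*((n:ℝ)-1) - (s-1)) / (2*((n:ℝ)-1)))^2
        = s^2*(2*β*((n:ℝ)-1) - (s-1))^2/(2*((n:ℝ)-1)) := by
      field_simp
    have h1 : s*(s-1)/(2*((n:ℝ)-1)) * (2*β*((n:ℝ)-1) - (s-1))^2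
        = s*(s-1)*(2*β*((n:ℝ)-1) - (s-1))^2/(2*((n:ℝ)-1)) := by ring
    rw [h1, h2]
    gcongr
    nlinarith [mul_nonneg (by linarith : (0:ℝ) ≤ s) (sq_nonneg (2*β*((n:ℝ)-1) - (s-1)))]
  calc (ℙ {ω | β * s < X ω}).toReal
      ≤ ProbabilityTheory.variance X ℙ / c^2 := htoReal
    _ ≤ (∫ ω, X ω ∂ℙ) / c^2 := by gcongr
    _ ≤ 2*((n:ℝ)-1) / (2*β*((n:ℝ)-1) - (s-1))^2 := hfinal
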